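/- Let (Ω, 𝓕, P) be a probability space, let ℓ ≥ 1, N ≥ 1, ε_m ≥ 0, let U_1, …, U_N be fixed nonzero ℓ×ℓ real matrices, and let Ũ_1, …, Ũ_N : Ω → M_ℓ(ℝ) be independent measurable random matrices with finite second-moment norms. Suppose that for every p: (i) E[(‖U_p − Ũ_p‖/‖U_p‖)²] ≤ ℓ ε_m² (machine-error condition), and (ii) E[(‖Ũ_p‖/‖U_p‖)²] ≤ 1 + 1/N (normalization condition). Then the relative error ε := ‖U_N ⋯ U_1 − Ũ_N ⋯ Ũ_1‖ / (∏_{p=1}^{N} ‖U_p‖) satisfies √(E[ε²]) ≤ N ε_m √(e·ℓ); in particular its standard deviation satisfies σ(ε) ≤ N ε_m √(e·ℓ), i.e. it grows at most linearly in N. -/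

import Mathlib

open MeasureTheory ProbabilityTheory
open scoped Matrix.Norms.L2Operator

/-- Matrices inherit the product measurable-space structure (entrywise). -/
instance matrixMeasurableSpace {l : ℕ} : MeasurableSpace (Matrix (Fin l) (Fin l) ℝ) :=
  inferInstanceAs (MeasurableSpace ((Fin l) → (Fin l) → ℝ))

/-- The ordered product `U_{n} U_{n-1} ⋯ U_1` of matrices (written with 0-based
indices), where the factor with the largest index acts last (leftmost). -/
noncomputable def mprod {l : ℕ} (U : ℕ → Matrix (Fin l) (Fin l) ℝ) :
    ℕ → Matrix (Fin l) (Fin l) ℝ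
  | 0 => 1
  | n + 1 => U n * mprod U n

instance matrixBorelSpace {l : ℕ} : BorelSpace (Matrix (Fin l) (Fin l) ℝ) :=
  inferInstanceAs (BorelSpace ((Fin l) → (Fin l) → ℝ))

lemma measurable_matrix_norm {l : ℕ} :
    Measurable fun M : Matrix (Fin l) (Fin l) ℝ => ‖M‖ := measurable_norm

lemma Measurable.matmul {X : Type*} [MeasurableSpace X] {l : ℕ}
    {f g : X → Matrix (Fin l) (Fin l) ℝ} (hf : Measurable f) (hg : Measurable g) :
    Measurable (fun x => f x * g x) := by
  apply measurable_pi_lambda; intro i; apply measurable_pi_lambda; intro j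
  simp only [Matrix.mul_apply]
  exact Finset.measurable_sum _ fun k _ =>
    ((measurable_pi_apply k).comp ((measurable_pi_apply i).comp hf)).mul
      ((measurable_pi_apply j).comp ((measurable_pi_apply k).comp hg))

lemma measurable_mprod {X : Type*} [MeasurableSpace X] {l : ℕ}
    (W : ℕ → X → Matrix (Fin l) (Fin l) ℝ) :
    ∀ n, (∀ p < n, Measurable (W p)) → Measurable (fun x => mprod (fun p => W p x) n) := by
  intro n
  induction n with
  | zero => intro _; simp only [mprod]; exact measurable_const
  | succ k ih =>
    intro h
    simp only [mprod]
    exact (h k (Nat.lt_succ_self k)).matmul (ih fun p hp => h p (hp.trans (Nat.lt_succ_self k)))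

lemma mprod_congr {l : ℕ} {f g : ℕ → Matrix (Fin l) (Fin l) ℝ} :
    ∀ n, (∀ p < n, f p = g p) → mprod f n = mprod g n := by
  intro n
  induction n with
  | zero => intro _; rfl
  | succ k ih =>
    intro h
    simp only [mprod]
    rw [h k (Nat.lt_succ_self k), ih fun p hp => h p (hp.trans (Nat.lt_succ_self k))]

lemma mprod_norm_le {l : ℕ} (hl : 1 ≤ l) (U : ℕ → Matrix (Fin l) (Fin l) ℝ) :
    ∀ n, ‖mprod U n‖ ≤ ∏ p ∈ Finset.range n, ‖U p‖ := by
  haveI : NeZero l := ⟨by omega⟩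
  haveI : Nontrivial (Matrix (Fin l) (Fin l) ℝ) :=
    inferInstanceAs (Nontrivial ((Fin l) → (Fin l) → ℝ))
  intro n
  induction n with
  | zero => simp [mprod, CStarRing.norm_one]
  | succ k ih =>
    simp only [mprod, Finset.prod_range_succ]
    calc ‖U k * mprod U k‖ ≤ ‖U k‖ * ‖mprod U k‖ := norm_mul_le _ _
    _ ≤ ‖U k‖ * ∏ p ∈ Finset.range k, ‖U p‖ :=
        mul_le_mul_of_nonneg_left ih (norm_nonneg _)
    _ = (∏ p ∈ Finset.range k, ‖U p‖) * ‖U k‖ := mul_comm _ _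

section L2Lemmas

variable {Ω : Type*} [MeasurableSpace Ω] {P : Measure Ω} [IsProbabilityMeasure P]

omit [IsProbabilityMeasure P] in
lemma integral_mul_le_sqrt_mul_sqrt {f g : Ω → ℝ} (hf : MemLp f 2 P) (hg : MemLp g 2 P)
    (hf0 : ∀ ω, 0 ≤ f ω) (hg0 : ∀ ω, 0 ≤ g ω) :
    ∫ ω, f ω * g ω ∂P ≤
      Real.sqrt (∫ ω, f ω ^ 2 ∂P) * Real.sqrt (∫ ω, g ω ^ 2 ∂P) := by
  have hpq : Real.HolderConjugate 2 2 := Real.HolderConjugate.two_two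
  have h2 : ENNReal.ofReal (2 : ℝ) = 2 := by norm_num
  have := integral_mul_le_Lp_mul_Lq_of_nonneg hpq (ae_of_all _ hf0) (ae_of_all _ hg0)
    (h2 ▸ hf) (h2 ▸ hg)
  calc ∫ ω, f ω * g ω ∂P ≤
      (∫ a, f a ^ (2 : ℝ) ∂P) ^ ((1 : ℝ) / 2) * (∫ a, g a ^ (2 : ℝ) ∂P) ^ ((1 : ℝ) / 2) := this
  _ = Real.sqrt (∫ ω, f ω ^ 2 ∂P) * Real.sqrt (∫ ω, g ω ^ 2 ∂P) := by
      simp_rw [Real.rpow_two, Real.sqrt_eq_rpow]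

omit [IsProbabilityMeasure P] in
lemma memℒp_mul_of_nonneg {f g : Ω → ℝ} (hf : MemLp f 2 P) (hg : MemLp g 2 P) :
    Integrable (fun ω => f ω * g ω) P := by
  refine Integrable.mono' ((hf.integrable_sq.add hg.integrable_sq).div_const 2)
    (hf.aestronglyMeasurable.mul hg.aestronglyMeasurable) (ae_of_all _ fun ω => ?_)
  have := sq_nonneg (|f ω| - |g ω|)
  have h1 : ‖f ω * g ω‖ = |f ω| * |g ω| := by rw [Real.norm_eq_abs, abs_mul]
  rw [h1]
  simp only [Pi.add_apply]
  nlinarith [sq_abs (f ω), sq_abs (g ω)]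

/-- Triangle-type bound: if `0 ≤ X ≤ f + g` pointwise with `f, g ∈ L²`, then
`X ∈ L²` and `‖X‖₂ ≤ ‖f‖₂ + ‖g‖₂` (in integral form). -/
lemma step_bound {X f g : Ω → ℝ} (hX : AEStronglyMeasurable X P)
    (hf : MemLp f 2 P) (hg : MemLp g 2 P)
    (hX0 : ∀ ω, 0 ≤ X ω) (hf0 : ∀ ω, 0 ≤ f ω) (hg0 : ∀ ω, 0 ≤ g ω)
    (hle : ∀ ω, X ω ≤ f ω + g ω) :
    MemLp X 2 P ∧ Real.sqrt (∫ ω, X ω ^ 2 ∂P) ≤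
      Real.sqrt (∫ ω, f ω ^ 2 ∂P) + Real.sqrt (∫ ω, g ω ^ 2 ∂P) := by
  have hfg : MemLp (f + g) 2 P := hf.add hg
  have hXmem : MemLp X 2 P := by
    refine hfg.of_le hX (ae_of_all _ fun ω => ?_)
    rw [Real.norm_of_nonneg (hX0 ω),
      Real.norm_of_nonneg (by exact add_nonneg (hf0 ω) (hg0 ω))]
    exact hle ω
  refine ⟨hXmem, ?_⟩
  set a := Real.sqrt (∫ ω, f ω ^ 2 ∂P) with ha
  set b := Real.sqrt (∫ ω, g ω ^ 2 ∂P) with hb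
  have hfgint : Integrable (fun ω => f ω * g ω) P := memℒp_mul_of_nonneg hf hg
  have hI1 : ∫ ω, X ω ^ 2 ∂P ≤ ∫ ω, (f ω + g ω) ^ 2 ∂P := by
    refine integral_mono_of_nonneg (ae_of_all _ fun ω => sq_nonneg _) ?_
      (ae_of_all _ fun ω => pow_le_pow_left₀ (hX0 ω) (hle ω) 2)
    exact hfg.integrable_sq
  have hI2 : ∫ ω, (f ω + g ω) ^ 2 ∂P ≤ (a + b) ^ 2 := by
    have i2 : Integrable (fun ω => 2 * (f ω * g ω)) P := hfgint.const_mul 2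
    have i1 : Integrable (fun ω => f ω ^ 2 + 2 * (f ω * g ω)) P := hf.integrable_sq.add i2
    have hexp : ∫ ω, (f ω + g ω) ^ 2 ∂P
        = (∫ ω, f ω ^ 2 ∂P) + 2 * (∫ ω, f ω * g ω ∂P) + ∫ ω, g ω ^ 2 ∂P := by
      simp_rw [add_sq, mul_assoc]
      rw [integral_add i1 hg.integrable_sq, integral_add hf.integrable_sq i2,
        integral_const_mul]
    have hcs := integral_mul_le_sqrt_mul_sqrt hf hg hf0 hg0
    have ha2 : a ^ 2 = ∫ ω, f ω ^ 2 ∂P :=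
      Real.sq_sqrt (integral_nonneg fun ω => sq_nonneg _)
    have hb2 : b ^ 2 = ∫ ω, g ω ^ 2 ∂P :=
      Real.sq_sqrt (integral_nonneg fun ω => sq_nonneg _)
    nlinarith [hcs]
  calc Real.sqrt (∫ ω, X ω ^ 2 ∂P) ≤ Real.sqrt ((a + b) ^ 2) :=
        Real.sqrt_le_sqrt (hI1.trans hI2)
  _ = a + b := Real.sqrt_sq (add_nonneg (Real.sqrt_nonneg _) (Real.sqrt_nonneg _))

end L2Lemmas

set_option maxHeartbeats 1000000 in
/-- On a probability space `(Ω, 𝓕, P)`, with `ℓ ≥ 1`, `N ≥ 1`,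
`ε_m ≥ 0`, fixed nonzero `ℓ×ℓ` real matrices `U_1, …, U_N`, and independent measurable
random matrices `Ũ_1, …, Ũ_N : Ω → M_ℓ(ℝ)` whose spectral norms have finite second
moments, suppose that for every `p`:
(i) `E[(‖U_p − Ũ_p‖/‖U_p‖)²] ≤ ℓ ε_m²` (machine-error condition), and
(ii) `E[(‖Ũ_p‖/‖U_p‖)²] ≤ 1 + 1/N` (normalization condition).
Then the relative error `ε := ‖U_N ⋯ U_1 − Ũ_N ⋯ Ũ_1‖ / ∏_p ‖U_p‖` satisfies
`√(E[ε²]) ≤ N ε_m √(e·ℓ)`; in particular its standard deviation satisfies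
`σ(ε) ≤ N ε_m √(e·ℓ)`, i.e. it grows at most linearly in `N`. -/
theorem normalized_random_product_error {Ω : Type*} [MeasurableSpace Ω]
    (P : Measure Ω) [IsProbabilityMeasure P]
    {l N : ℕ} (hl : 1 ≤ l) (hN : 1 ≤ N) (εm : ℝ) (hεm : 0 ≤ εm)
    (U : ℕ → Matrix (Fin l) (Fin l) ℝ) (hU : ∀ p < N, U p ≠ 0)
    (V : ℕ → Ω → Matrix (Fin l) (Fin l) ℝ)
    (hVmeas : ∀ p < N, Measurable (V p))
    (hVL2 : ∀ p < N, MemLp (fun ω => ‖V p ω‖) 2 P)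
    (hindep : iIndepFun (fun p : Fin N => V p.1) P)
    (herr : ∀ p < N, ∫ ω, (‖U p - V p ω‖ / ‖U p‖) ^ 2 ∂P ≤ (l : ℝ) * εm ^ 2)
    (hnorm : ∀ p < N, ∫ ω, (‖V p ω‖ / ‖U p‖) ^ 2 ∂P ≤ 1 + 1 / (N : ℝ)) :
    Real.sqrt (∫ ω,
        (‖mprod U N - mprod (fun p => V p ω) N‖ / ∏ p ∈ Finset.range N, ‖U p‖) ^ 2 ∂P) ≤
          (N : ℝ) * εm * Real.sqrt (Real.exp 1 * l) ∧
      Real.sqrt (variance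
        (fun ω => ‖mprod U N - mprod (fun p => V p ω) N‖ / ∏ p ∈ Finset.range N, ‖U p‖) P) ≤
          (N : ℝ) * εm * Real.sqrt (Real.exp 1 * l) := by
  have hNpos : (0 : ℝ) < N := by exact_mod_cast Nat.pos_of_ne_zero (by omega)
  have hUnorm : ∀ p, p < N → 0 < ‖U p‖ := fun p hp => norm_pos_iff.mpr (hU p hp)
  have hKpos : ∀ n, n ≤ N → 0 < ∏ p ∈ Finset.range n, ‖U p‖ := fun n hn =>
    Finset.prod_pos fun p hp => hUnorm p (lt_of_lt_of_le (Finset.mem_range.mp hp) hn)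
  have hVn : ∀ n, n ≤ N → Measurable (fun ω => mprod (fun p => V p ω) n) := fun n hn =>
    measurable_mprod V n fun p hp => hVmeas p (lt_of_lt_of_le hp hn)
  have hEmeas : ∀ n, n ≤ N → Measurable (fun ω =>
      ‖mprod U n - mprod (fun p => V p ω) n‖ / ∏ p ∈ Finset.range n, ‖U p‖) := fun n hn =>
    (measurable_matrix_norm.comp (measurable_const.sub (hVn n hn))).div_const _
  set A := Real.sqrt (1 + 1 / (N : ℝ)) with hA
  set b := Real.sqrt l * εm with hb
  have hb0 : 0 ≤ b := mul_nonneg (Real.sqrt_nonneg _) hεm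
  have hA0 : 0 ≤ A := Real.sqrt_nonneg _
  have hA1 : 1 ≤ A := by
    have h1 : (1 : ℝ) ≤ 1 + 1 / (N : ℝ) := le_add_of_nonneg_right (by positivity)
    calc (1 : ℝ) = Real.sqrt 1 := Real.sqrt_one.symm
    _ ≤ A := Real.sqrt_le_sqrt h1
  have main : ∀ n, n ≤ N →
      MemLp (fun ω =>
        ‖mprod U n - mprod (fun p => V p ω) n‖ / ∏ p ∈ Finset.range n, ‖U p‖) 2 P ∧
      Real.sqrt (∫ ω,
          (‖mprod U n - mprod (fun p => V p ω) n‖ / ∏ p ∈ Finset.range n, ‖U p‖) ^ 2 ∂P) ≤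
        (n : ℝ) * (A ^ n * b) := by
    intro n
    induction n with
    | zero =>
      intro _
      have h0 : (fun ω : Ω =>
          ‖mprod U 0 - mprod (fun p => V p ω) 0‖ / ∏ p ∈ Finset.range 0, ‖U p‖)
          = fun _ : Ω => (0 : ℝ) := by
        funext ω; simp [mprod]
      refine ⟨by rw [h0]; exact memLp_const 0, ?_⟩
      have hz : ∫ ω, (‖mprod U 0 - mprod (fun p => V p ω) 0‖ /
          ∏ p ∈ Finset.range 0, ‖U p‖) ^ 2 ∂P = 0 := by
        simp [mprod]
      rw [hz]
      simp
    | succ n ih =>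
      intro hn1
      have hnN : n < N := hn1
      obtain ⟨ihM, ihB⟩ := ih hnN.le
      have hUn : 0 < ‖U n‖ := hUnorm n hnN
      have hKn : 0 < ∏ p ∈ Finset.range n, ‖U p‖ := hKpos n hnN.le
      have hKne : (∏ p ∈ Finset.range n, ‖U p‖) ≠ 0 := ne_of_gt hKn
      have hUne : ‖U n‖ ≠ 0 := ne_of_gt hUn
      -- pointwise recursive bound
      have hpt : ∀ ω,
          ‖mprod U (n+1) - mprod (fun p => V p ω) (n+1)‖ / ∏ p ∈ Finset.range (n+1), ‖U p‖ ≤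
            (‖V n ω‖ / ‖U n‖) *
              (‖mprod U n - mprod (fun p => V p ω) n‖ / ∏ p ∈ Finset.range n, ‖U p‖)
            + ‖U n - V n ω‖ / ‖U n‖ := by
        intro ω
        have hsplit : mprod U (n+1) - mprod (fun p => V p ω) (n+1)
            = V n ω * (mprod U n - mprod (fun p => V p ω) n) + (U n - V n ω) * mprod U n := by
          simp only [mprod]; rw [mul_sub, sub_mul]; abel
        have hnorm1 : ‖mprod U (n+1) - mprod (fun p => V p ω) (n+1)‖ ≤
            ‖V n ω‖ * ‖mprod U n - mprod (fun p => V p ω) n‖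
            + ‖U n - V n ω‖ * ∏ p ∈ Finset.range n, ‖U p‖ := by
          rw [hsplit]
          refine (norm_add_le _ _).trans (add_le_add (norm_mul_le _ _) ?_)
          exact (norm_mul_le _ _).trans
            (mul_le_mul_of_nonneg_left (mprod_norm_le hl U n) (norm_nonneg _))
        rw [Finset.prod_range_succ, div_le_iff₀ (mul_pos hKn hUn)]
        refine hnorm1.trans (le_of_eq ?_)
        field_simp
      -- MemLp facts
      have hameas : Measurable (fun ω => ‖V n ω‖ / ‖U n‖) :=
        (measurable_matrix_norm.comp (hVmeas n hnN)).div_const _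
      have hmmeas : Measurable (fun ω => ‖U n - V n ω‖ / ‖U n‖) :=
        (measurable_matrix_norm.comp (measurable_const.sub (hVmeas n hnN))).div_const _
      have ha2 : MemLp (fun ω => ‖V n ω‖ / ‖U n‖) 2 P := by
        have h := (hVL2 n hnN).const_mul (‖U n‖)⁻¹
        have heq : (fun ω => ‖V n ω‖ / ‖U n‖) = fun ω => (‖U n‖)⁻¹ * ‖V n ω‖ := by
          funext ω; rw [inv_mul_eq_div]
        rw [heq]; exact h
      have hm2 : MemLp (fun ω => ‖U n - V n ω‖ / ‖U n‖) 2 P := by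
        refine ((memLp_const (1 : ℝ)).add ha2).of_le hmmeas.aestronglyMeasurable
          (ae_of_all _ fun ω => ?_)
        have h1 : ‖U n - V n ω‖ / ‖U n‖ ≤ 1 + ‖V n ω‖ / ‖U n‖ := by
          rw [div_le_iff₀ hUn]
          calc ‖U n - V n ω‖ ≤ ‖U n‖ + ‖V n ω‖ := norm_sub_le _ _
          _ = (1 + ‖V n ω‖ / ‖U n‖) * ‖U n‖ := by field_simp
        simp only [Pi.add_apply]
        rw [Real.norm_of_nonneg (div_nonneg (norm_nonneg _) (norm_nonneg _)),
          Real.norm_of_nonneg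
            (add_nonneg zero_le_one (div_nonneg (norm_nonneg _) (norm_nonneg _)))]
        exact h1
      -- independence of the new factor from the past
      have hindep_a : IndepFun (fun ω => ‖V n ω‖ / ‖U n‖)
          (fun ω => ‖mprod U n - mprod (fun p => V p ω) n‖ / ∏ p ∈ Finset.range n, ‖U p‖)
          P := by
        set i₀ : Fin N := ⟨n, hnN⟩ with hi₀
        have hdisj : Disjoint ({i₀} : Finset (Fin N)) (Finset.Iio i₀) :=
          Finset.disjoint_singleton_left.mpr (by simp)
        have hbase := hindep.indepFun_finset {i₀} (Finset.Iio i₀) hdisj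
          (fun i => hVmeas i.1 i.isLt)
        have hgS : Measurable (fun v : {x // x ∈ ({i₀} : Finset (Fin N))} →
            Matrix (Fin l) (Fin l) ℝ =>
            ‖v ⟨i₀, Finset.mem_singleton_self i₀⟩‖ / ‖U n‖) :=
          (measurable_matrix_norm.comp (measurable_pi_apply _)).div_const _
        have hgT : Measurable (fun v : {x // x ∈ Finset.Iio i₀} →
            Matrix (Fin l) (Fin l) ℝ =>
            ‖mprod U n - mprod (fun p =>
              if h : p < n then v ⟨⟨p, h.trans hnN⟩, Finset.mem_Iio.mpr (Fin.mk_lt_mk.mpr h)⟩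
              else 1) n‖ / ∏ p ∈ Finset.range n, ‖U p‖) := by
          refine (measurable_matrix_norm.comp
            (measurable_const.sub (measurable_mprod _ n fun p hp => ?_))).div_const _
          simp only [dif_pos hp]
          exact measurable_pi_apply _
        have hcomp := hbase.comp hgS hgT
        have heq1 : ((fun v : {x // x ∈ ({i₀} : Finset (Fin N))} → Matrix (Fin l) (Fin l) ℝ =>
            ‖v ⟨i₀, Finset.mem_singleton_self i₀⟩‖ / ‖U n‖) ∘
            (fun a (i : {x // x ∈ ({i₀} : Finset (Fin N))}) => V (i : Fin N).1 a))
            = fun ω => ‖V n ω‖ / ‖U n‖ := rfl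
        have heq2 : ((fun v : {x // x ∈ Finset.Iio i₀} → Matrix (Fin l) (Fin l) ℝ =>
            ‖mprod U n - mprod (fun p =>
              if h : p < n then v ⟨⟨p, h.trans hnN⟩, Finset.mem_Iio.mpr (Fin.mk_lt_mk.mpr h)⟩
              else 1) n‖ / ∏ p ∈ Finset.range n, ‖U p‖) ∘
            (fun a (i : {x // x ∈ Finset.Iio i₀}) => V (i : Fin N).1 a))
            = fun ω => ‖mprod U n - mprod (fun p => V p ω) n‖ /
                ∏ p ∈ Finset.range n, ‖U p‖ := by
          funext ω
          simp only [Function.comp_apply]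
          congr 2
          congr 1
          exact mprod_congr (f := fun p => if h : p < n then V p ω
              else (1 : Matrix (Fin l) (Fin l) ℝ)) (g := fun p => V p ω) n
            (fun p hp => dif_pos hp)
        rw [← heq1, ← heq2]
        exact hcomp
      have hsq_indep : IndepFun (fun ω => (‖V n ω‖ / ‖U n‖) ^ 2)
          (fun ω => (‖mprod U n - mprod (fun p => V p ω) n‖ /
            ∏ p ∈ Finset.range n, ‖U p‖) ^ 2) P :=
        hindep_a.comp (measurable_id.pow_const 2) (measurable_id.pow_const 2)
      have ha2int : Integrable (fun ω => (‖V n ω‖ / ‖U n‖) ^ 2) P := ha2.integrable_sq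
      have hε2int : Integrable (fun ω => (‖mprod U n - mprod (fun p => V p ω) n‖ /
          ∏ p ∈ Finset.range n, ‖U p‖) ^ 2) P := ihM.integrable_sq
      have hprod_eq : ∫ ω, ((‖V n ω‖ / ‖U n‖) *
            (‖mprod U n - mprod (fun p => V p ω) n‖ / ∏ p ∈ Finset.range n, ‖U p‖)) ^ 2 ∂P
          = (∫ ω, (‖V n ω‖ / ‖U n‖) ^ 2 ∂P) *
            ∫ ω, (‖mprod U n - mprod (fun p => V p ω) n‖ /
              ∏ p ∈ Finset.range n, ‖U p‖) ^ 2 ∂P := by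
        simp_rw [mul_pow]
        exact hsq_indep.integral_mul_eq_mul_integral ha2int.aestronglyMeasurable hε2int.aestronglyMeasurable
      have haε : MemLp (fun ω => (‖V n ω‖ / ‖U n‖) *
          (‖mprod U n - mprod (fun p => V p ω) n‖ / ∏ p ∈ Finset.range n, ‖U p‖)) 2 P := by
        refine (memLp_two_iff_integrable_sq
          ((hameas.mul (hEmeas n hnN.le)).aestronglyMeasurable)).2 ?_
        have h := hsq_indep.integrable_mul ha2int hε2int
        exact h.congr (ae_of_all _ fun ω => by simp [Pi.mul_apply, mul_pow])
      -- assemble via triangle inequality in L²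
      obtain ⟨hmem, hbound⟩ := step_bound (P := P)
        (X := fun ω => ‖mprod U (n+1) - mprod (fun p => V p ω) (n+1)‖ /
          ∏ p ∈ Finset.range (n+1), ‖U p‖)
        (f := fun ω => (‖V n ω‖ / ‖U n‖) *
          (‖mprod U n - mprod (fun p => V p ω) n‖ / ∏ p ∈ Finset.range n, ‖U p‖))
        (g := fun ω => ‖U n - V n ω‖ / ‖U n‖)
        (hEmeas (n+1) hn1).aestronglyMeasurable haε hm2
        (fun ω => div_nonneg (norm_nonneg _) (Finset.prod_nonneg fun p _ => norm_nonneg _))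
        (fun ω => mul_nonneg (div_nonneg (norm_nonneg _) (norm_nonneg _))
          (div_nonneg (norm_nonneg _) (Finset.prod_nonneg fun p _ => norm_nonneg _)))
        (fun ω => div_nonneg (norm_nonneg _) (norm_nonneg _))
        hpt
      refine ⟨hmem, ?_⟩
      have h2 : Real.sqrt (∫ ω, (‖V n ω‖ / ‖U n‖) ^ 2 ∂P) ≤ A :=
        Real.sqrt_le_sqrt (hnorm n hnN)
      have h3 : Real.sqrt (∫ ω, (‖U n - V n ω‖ / ‖U n‖) ^ 2 ∂P) ≤ b := by
        refine (Real.sqrt_le_sqrt (herr n hnN)).trans (le_of_eq ?_)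
        rw [hb, Real.sqrt_mul (Nat.cast_nonneg l), Real.sqrt_sq hεm]
      have h1 : Real.sqrt (∫ ω, ((‖V n ω‖ / ‖U n‖) *
            (‖mprod U n - mprod (fun p => V p ω) n‖ /
              ∏ p ∈ Finset.range n, ‖U p‖)) ^ 2 ∂P)
          ≤ A * ((n : ℝ) * (A ^ n * b)) := by
        rw [hprod_eq, Real.sqrt_mul (integral_nonneg fun ω => sq_nonneg _)]
        exact mul_le_mul h2 ihB (Real.sqrt_nonneg _) hA0
      have hAn1 : 1 ≤ A ^ (n+1) := by
        calc (1 : ℝ) = 1 ^ (n+1) := (one_pow _).symm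
        _ ≤ A ^ (n+1) := pow_le_pow_left₀ zero_le_one hA1 _
      calc Real.sqrt (∫ ω, (‖mprod U (n+1) - mprod (fun p => V p ω) (n+1)‖ /
            ∏ p ∈ Finset.range (n+1), ‖U p‖) ^ 2 ∂P)
          ≤ Real.sqrt (∫ ω, ((‖V n ω‖ / ‖U n‖) *
              (‖mprod U n - mprod (fun p => V p ω) n‖ /
                ∏ p ∈ Finset.range n, ‖U p‖)) ^ 2 ∂P)
            + Real.sqrt (∫ ω, (‖U n - V n ω‖ / ‖U n‖) ^ 2 ∂P) := hbound
      _ ≤ A * ((n : ℝ) * (A ^ n * b)) + b := add_le_add h1 h3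
      _ ≤ ((n + 1 : ℕ) : ℝ) * (A ^ (n+1) * b) := by
          push_cast
          have : A * ((n : ℝ) * (A ^ n * b)) = (n : ℝ) * (A ^ (n+1) * b) := by ring
          rw [this]
          nlinarith [hAn1, hb0, mul_nonneg (Nat.cast_nonneg n : (0:ℝ) ≤ n) hb0]
  obtain ⟨hmemN, hboundN⟩ := main N le_rfl
  have hfinal : (N : ℝ) * (A ^ N * b) ≤ (N : ℝ) * εm * Real.sqrt (Real.exp 1 * l) := by
    have hx : (0 : ℝ) ≤ 1 + 1 / (N : ℝ) := by positivity
    have h1 : (1 + 1 / (N : ℝ)) ≤ Real.exp (1 / (N : ℝ)) := by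
      have := Real.add_one_le_exp (1 / (N : ℝ)); linarith
    have h2 : (1 + 1 / (N : ℝ)) ^ N ≤ Real.exp 1 := by
      calc (1 + 1 / (N : ℝ)) ^ N ≤ (Real.exp (1 / (N : ℝ))) ^ N :=
            pow_le_pow_left₀ hx h1 N
      _ = Real.exp ((N : ℝ) * (1 / (N : ℝ))) := (Real.exp_nat_mul _ N).symm
      _ = Real.exp 1 := by rw [mul_one_div, div_self (ne_of_gt hNpos)]
    have hAN : A ^ N ≤ Real.sqrt (Real.exp 1) := by
      have hsq : (A ^ N) ^ 2 = (1 + 1 / (N : ℝ)) ^ N := by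
        rw [← pow_mul, mul_comm, pow_mul, hA, Real.sq_sqrt hx]
      have : A ^ N = Real.sqrt ((1 + 1 / (N : ℝ)) ^ N) := by
        rw [← hsq, Real.sqrt_sq (pow_nonneg hA0 _)]
      rw [this]
      exact Real.sqrt_le_sqrt h2
    calc (N : ℝ) * (A ^ N * b) = (N : ℝ) * εm * (A ^ N * Real.sqrt l) := by rw [hb]; ring
    _ ≤ (N : ℝ) * εm * (Real.sqrt (Real.exp 1) * Real.sqrt l) := by
        refine mul_le_mul_of_nonneg_left
          (mul_le_mul_of_nonneg_right hAN (Real.sqrt_nonneg _)) (by positivity)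
    _ = (N : ℝ) * εm * Real.sqrt (Real.exp 1 * l) := by
        rw [Real.sqrt_mul (le_of_lt (Real.exp_pos 1))]
  refine ⟨hboundN.trans hfinal, ?_⟩
  have hvar := variance_le_expectation_sq (μ := P)
    (X := fun ω => ‖mprod U N - mprod (fun p => V p ω) N‖ / ∏ p ∈ Finset.range N, ‖U p‖)
    (hEmeas N le_rfl).aestronglyMeasurable
  refine (Real.sqrt_le_sqrt hvar).trans ?_
  exact hboundN.trans hfinal
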